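/- Under the setting of the diagonal 1D truncated model (A^T A diagonal with positive entries, T subadditive, nondecreasing, T(0)=0, T(s)>0 for s>0), any global minimizer v of E^ζ introduces no new discontinuities: {i : v_{i+1} ≠ vᵢ} ⊆ {i : (ζ1_Ω)_{i+1} ≠ (ζ1_Ω)ᵢ}. -/

import Mathlib

open Fin.NatCast

private lemma clip_lip (ζ a b : ℝ) : |max 0 (min a ζ) - max 0 (min b ζ)| ≤ |a - b| := by
  calc |max 0 (min a ζ) - max 0 (min b ζ)|
      = |max (min a ζ) 0 - max (min b ζ) 0| := by rw [max_comm 0 (min a ζ), max_comm 0 (min b ζ)]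
    _ ≤ |min a ζ - min b ζ| := abs_max_sub_max_le_abs _ _ _
    _ ≤ max |a - b| |ζ - ζ| := abs_min_sub_min_le_max a ζ b ζ
    _ = |a - b| := by simp

private lemma clip_sq (ζ x y : ℝ) (hy0 : 0 ≤ y) (hyζ : y ≤ ζ) :
    (max 0 (min x ζ) - y) ^ 2 ≤ (x - y) ^ 2 ∧
      ((x < 0 ∨ ζ < x) → (max 0 (min x ζ) - y) ^ 2 < (x - y) ^ 2) := by
  rcases lt_or_ge x 0 with hx | hx
  · have h1 : min x ζ = x := min_eq_left (by linarith)
    have h2 : max 0 x = 0 := max_eq_left (by linarith)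
    rw [h1, h2]
    exact ⟨by nlinarith, fun _ => by nlinarith⟩
  rcases lt_or_ge ζ x with hx2 | hx2
  · have h1 : min x ζ = ζ := min_eq_right (by linarith)
    have h2 : max 0 ζ = ζ := max_eq_right (by linarith)
    rw [h1, h2]
    exact ⟨by nlinarith, fun _ => by nlinarith⟩
  · have h1 : min x ζ = x := min_eq_left hx2
    have h2 : max 0 x = x := max_eq_right hx
    rw [h1, h2]
    exact ⟨le_refl _, fun h => by rcases h with h | h <;> linarith⟩

private lemma sum_split_two (m i : ℕ) (hi : i + 1 < m) (f : ℕ → ℝ) :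
    ∑ j ∈ Finset.range m, f j
      = f i + (f (i + 1) + ∑ j ∈ ((Finset.range m).erase i).erase (i + 1), f j) := by
  have h1 : i ∈ Finset.range m := Finset.mem_range.2 (by omega)
  have h2 : i + 1 ∈ (Finset.range m).erase i :=
    Finset.mem_erase.2 ⟨by omega, Finset.mem_range.2 hi⟩
  rw [Finset.add_sum_erase _ f h2, Finset.add_sum_erase _ f h1]

theorem truncated_regularization_no_new_discontinuity (N : ℕ) [NeZero N]
    (T : ℝ → ℝ)
    (hT0 : T 0 = 0)
    (hmono : MonotoneOn T (Set.Ici 0))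
    (hpos : ∀ s > (0 : ℝ), 0 < T s)
    (hsub : ∀ a b : ℝ, 0 ≤ a → 0 ≤ b → T (a + b) ≤ T a + T b)
    (Ω : Finset (Fin N)) (hΩ1 : Ω.Nonempty) (hΩ2 : Ω ≠ Finset.univ)
    (ζ α : ℝ) (hζ : 0 < ζ) (hα : 0 < α)
    (d : Fin N → ℝ) (hd : ∀ i, 0 < d i)
    (g : Fin N → ℝ) (hg : g = fun i => if i ∈ Ω then ζ else 0)
    (E : (Fin N → ℝ) → ℝ)
    (hE : ∀ u, E u =
      (∑ i ∈ Finset.range (N - 1), T |u ((i + 1 : ℕ) : Fin N) - u ((i : ℕ) : Fin N)|)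
        + α / 2 * ∑ i, d i * (u i - g i) ^ 2)
    (v : Fin N → ℝ) (hv : ∀ u, E v ≤ E u) :
    ∀ i ∈ Finset.range (N - 1),
      v ((i + 1 : ℕ) : Fin N) ≠ v ((i : ℕ) : Fin N) →
      g ((i + 1 : ℕ) : Fin N) ≠ g ((i : ℕ) : Fin N) := by
  have hN : 0 < N := Nat.pos_of_ne_zero (NeZero.ne N)
  have hTnn : ∀ s : ℝ, 0 ≤ s → 0 ≤ T s := by
    intro s hs
    have := hmono (Set.mem_Ici.2 le_rfl) (Set.mem_Ici.2 hs) hs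
    linarith [hT0]
  have hTtri : ∀ x y z : ℝ, T |x - z| ≤ T |x - y| + T |y - z| := by
    intro x y z
    have h1 : |x - z| ≤ |x - y| + |y - z| := abs_sub_le x y z
    have h2 : T |x - z| ≤ T (|x - y| + |y - z|) :=
      hmono (Set.mem_Ici.2 (abs_nonneg _)) (Set.mem_Ici.2 (by positivity)) h1
    have h3 := hsub |x - y| |y - z| (abs_nonneg _) (abs_nonneg _)
    linarith
  have hgmem : ∀ k : Fin N, 0 ≤ g k ∧ g k ≤ ζ := by
    intro k; rw [hg]; dsimp only
    split_ifs <;> constructor <;> linarith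
  have hcastne : ∀ j k : ℕ, j < N → k < N → j ≠ k → (j : Fin N) ≠ (k : Fin N) := by
    intro j k hj hk hne heq
    exact hne (by rw [← Fin.val_cast_of_lt hj, ← Fin.val_cast_of_lt hk, heq])
  have hfid : ∀ (p : Fin N) (a : ℝ), (a - g p) ^ 2 < (v p - g p) ^ 2 →
      ∑ k, d k * (Function.update v p a k - g k) ^ 2 < ∑ k, d k * (v k - g k) ^ 2 := by
    intro p a ha
    apply Finset.sum_lt_sum
    · intro k _
      by_cases hk : k = p
      · subst hk
        rw [Function.update_self]
        have := (hd k).le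
        nlinarith
      · rw [Function.update_of_ne hk]
    · exact ⟨p, Finset.mem_univ p, by
        rw [Function.update_self]
        exact mul_lt_mul_of_pos_left ha (hd p)⟩
  have hElt : ∀ (u : Fin N → ℝ),
      (∑ i ∈ Finset.range (N - 1), T |u ((i + 1 : ℕ) : Fin N) - u ((i : ℕ) : Fin N)|)
        ≤ (∑ i ∈ Finset.range (N - 1), T |v ((i + 1 : ℕ) : Fin N) - v ((i : ℕ) : Fin N)|) →
      (∑ k, d k * (u k - g k) ^ 2) < (∑ k, d k * (v k - g k) ^ 2) → False := by
    intro u hreg hfidlt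
    have h1 := hv u
    rw [hE u, hE v] at h1
    have hα2 : 0 < α / 2 := by linarith
    nlinarith [mul_lt_mul_of_pos_left hfidlt hα2]
  -- extremum principle: 0 ≤ v ≤ ζ
  have hbound : ∀ k : Fin N, 0 ≤ v k ∧ v k ≤ ζ := by
    by_contra hcon
    push_neg at hcon
    obtain ⟨k, hk⟩ := hcon
    have hout : v k < 0 ∨ ζ < v k := by
      by_cases h : 0 ≤ v k
      · exact Or.inr (hk h)
      · exact Or.inl (lt_of_not_ge h)
    set u : Fin N → ℝ := fun j => max 0 (min (v j) ζ) with hu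
    have hfidlt : (∑ j, d j * (u j - g j) ^ 2) < (∑ j, d j * (v j - g j) ^ 2) := by
      apply Finset.sum_lt_sum
      · intro j _
        have h1 := (clip_sq ζ (v j) (g j) (hgmem j).1 (hgmem j).2).1
        have h2 := (hd j).le
        nlinarith
      · refine ⟨k, Finset.mem_univ k, ?_⟩
        have := (clip_sq ζ (v k) (g k) (hgmem k).1 (hgmem k).2).2 hout
        exact mul_lt_mul_of_pos_left this (hd k)
    refine hElt u ?_ hfidlt
    apply Finset.sum_le_sum
    intro j _
    beta_reduce
    exact hmono (Set.mem_Ici.2 (abs_nonneg _)) (Set.mem_Ici.2 (abs_nonneg _)) (clip_lip ζ _ _)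
  -- main argument
  intro i hi hne
  have hiN : i < N - 1 := Finset.mem_range.1 hi
  have hi0 : i < N := by omega
  have hi1 : i + 1 < N := by omega
  set j0 : Fin N := ((i : ℕ) : Fin N) with hj0
  set j1 : Fin N := ((i + 1 : ℕ) : Fin N) with hj1
  intro hgeq
  set a : ℝ := v j0 with ha
  set b : ℝ := v j1 with hb
  set c : ℝ := g j0 with hc
  have hgc1 : g j1 = c := hgeq
  have hane : b ≠ a := hne
  -- regularization does not increase when updating at j1 to value a
  have hregA : (∑ j ∈ Finset.range (N - 1),
        T |Function.update v j1 a ((j + 1 : ℕ) : Fin N) - Function.update v j1 a ((j : ℕ) : Fin N)|)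
      ≤ (∑ j ∈ Finset.range (N - 1), T |v ((j + 1 : ℕ) : Fin N) - v ((j : ℕ) : Fin N)|) := by
    set w := Function.update v j1 a with hw
    have hwj1 : w j1 = a := Function.update_self _ _ _
    have hwne : ∀ p : Fin N, p ≠ j1 → w p = v p := fun p hp => Function.update_of_ne hp _ _
    have hwj0 : w j0 = a := hwne j0 (hcastne i (i+1) hi0 hi1 (by omega))
    rcases Nat.lt_or_ge (i + 1) (N - 1) with hlt | hge
    · -- interior
      have hi2 : i + 1 + 1 < N := by omega
      rw [sum_split_two (N-1) i hlt, sum_split_two (N-1) i hlt]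
      beta_reduce
      have hS : ∑ j ∈ ((Finset.range (N-1)).erase i).erase (i+1),
            T |w ((j + 1 : ℕ) : Fin N) - w ((j : ℕ) : Fin N)|
          = ∑ j ∈ ((Finset.range (N-1)).erase i).erase (i+1),
            T |v ((j + 1 : ℕ) : Fin N) - v ((j : ℕ) : Fin N)| := by
        apply Finset.sum_congr rfl
        intro j hj
        beta_reduce
        obtain ⟨hj1', hj2', hjr⟩ : j ≠ i + 1 ∧ j ≠ i ∧ j < N - 1 := by
          simpa [Finset.mem_erase, Finset.mem_range] using hj
        rw [hwne _ (hcastne (j+1) (i+1) (by omega) hi1 (by omega)),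
            hwne _ (hcastne j (i+1) (by omega) hi1 (by omega))]
      have hw2 : w ((i + 1 + 1 : ℕ) : Fin N) = v ((i + 1 + 1 : ℕ) : Fin N) :=
        hwne _ (hcastne (i+1+1) (i+1) hi2 hi1 (by omega))
      rw [hS, hw2, ← hj1, ← hj0, hwj1, hwj0]
      have h0 : T |a - a| = 0 := by rw [sub_self, abs_zero, hT0]
      have htri := hTtri (v ((i + 1 + 1 : ℕ) : Fin N)) b a
      simp only [ha, hb] at htri h0 ⊢
      linarith
    · -- i is the last index: termwise
      apply Finset.sum_le_sum
      intro j hj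
      beta_reduce
      have hjr : j < N - 1 := Finset.mem_range.1 hj
      by_cases hji : j = i
      · subst hji
        rw [← hj1, ← hj0, hwj1, hwj0, sub_self, abs_zero, hT0]
        exact hTnn _ (abs_nonneg _)
      · rw [hwne _ (hcastne (j+1) (i+1) (by omega) hi1 (by omega)),
            hwne _ (hcastne j (i+1) (by omega) hi1 (by omega))]
  -- regularization does not increase when updating at j0 to value b
  have hregB : (∑ j ∈ Finset.range (N - 1),
        T |Function.update v j0 b ((j + 1 : ℕ) : Fin N) - Function.update v j0 b ((j : ℕ) : Fin N)|)
      ≤ (∑ j ∈ Finset.range (N - 1), T |v ((j + 1 : ℕ) : Fin N) - v ((j : ℕ) : Fin N)|) := by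
    set w := Function.update v j0 b with hw
    have hwj0 : w j0 = b := Function.update_self _ _ _
    have hwne : ∀ p : Fin N, p ≠ j0 → w p = v p := fun p hp => Function.update_of_ne hp _ _
    have hwj1 : w j1 = b := hwne j1 (hcastne (i+1) i hi1 hi0 (by omega))
    rcases Nat.eq_zero_or_pos i with hiz | hipos
    · -- i = 0: termwise
      apply Finset.sum_le_sum
      intro j hj
      beta_reduce
      have hjr : j < N - 1 := Finset.mem_range.1 hj
      by_cases hji : j = i
      · subst hji
        rw [← hj1, ← hj0, hwj1, hwj0, sub_self, abs_zero, hT0]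
        exact hTnn _ (abs_nonneg _)
      · rw [hwne _ (hcastne (j+1) i (by omega) hi0 (by omega)),
            hwne _ (hcastne j i (by omega) hi0 hji)]
    · -- interior: indices i-1 and i
      obtain ⟨m, rfl⟩ : ∃ m, i = m + 1 := ⟨i - 1, by omega⟩
      have hmlt : m + 1 < N - 1 := by omega
      have hmN : m < N := by omega
      rw [sum_split_two (N-1) m hmlt, sum_split_two (N-1) m hmlt]
      beta_reduce
      have hS : ∑ j ∈ ((Finset.range (N-1)).erase m).erase (m+1),
            T |w ((j + 1 : ℕ) : Fin N) - w ((j : ℕ) : Fin N)|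
          = ∑ j ∈ ((Finset.range (N-1)).erase m).erase (m+1),
            T |v ((j + 1 : ℕ) : Fin N) - v ((j : ℕ) : Fin N)| := by
        apply Finset.sum_congr rfl
        intro j hj
        beta_reduce
        obtain ⟨hj1', hj2', hjr⟩ : j ≠ m + 1 ∧ j ≠ m ∧ j < N - 1 := by
          simpa [Finset.mem_erase, Finset.mem_range] using hj
        rw [hwne _ (hcastne (j+1) (m+1) (by omega) hi0 (by omega)),
            hwne _ (hcastne j (m+1) (by omega) hi0 (by omega))]
      have hwm : w ((m : ℕ) : Fin N) = v ((m : ℕ) : Fin N) :=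
        hwne _ (hcastne m (m+1) hmN hi0 (by omega))
      rw [hS, hwm, ← hj1, ← hj0, hwj1, hwj0]
      have h0 : T |b - b| = 0 := by rw [sub_self, abs_zero, hT0]
      have htri := hTtri b a (v ((m : ℕ) : Fin N))
      simp only [ha, hb] at htri h0 ⊢
      linarith
  -- trichotomy on fidelity terms
  rcases lt_trichotomy ((b - c) ^ 2) ((a - c) ^ 2) with hlt | heq | hgt
  · exact hElt (Function.update v j0 b) hregB (hfid j0 b (by rw [← hc, ← ha]; exact hlt))
  · -- equality case: use extremum principle
    have h2c : a + b = 2 * c := by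
      have hz : (b - a) * (a + b - 2 * c) = 0 := by nlinarith
      rcases mul_eq_zero.1 hz with h | h
      · exact absurd (by linarith : b = a) hane
      · linarith
    have hcval : c = 0 ∨ c = ζ := by
      rw [hc, hg]; dsimp only
      split_ifs
      · right; rfl
      · left; rfl
    obtain ⟨ha0, haζ⟩ := hbound j0
    obtain ⟨hb0, hbζ⟩ := hbound j1
    rw [← ha] at ha0 haζ
    rw [← hb] at hb0 hbζ
    rcases hcval with h | h
    · exact hane (by nlinarith)
    · exact hane (by nlinarith)
  · exact hElt (Function.update v j1 a) hregA (hfid j1 a (by rw [hgc1, ← hb]; exact hgt))
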